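/- For every odd integer n ≥ 3 and every integer d with 0 ≤ d ≤ (n−1)/2, the number of cyclic permutations of [n] (permutations of [n] consisting of a single n-cycle) c with min(cdes(c), casc(c)) = d equals 2·A(n−1, d−1). -/

import Mathlib

/-- The word `π₁π₂⋯πₙ` of a permutation of `[n] = {1, …, n}`. -/
def permWord (n : ℕ) (π : Equiv.Perm (Fin n)) : ℕ → ℕ :=
  fun i => if h : i < n then (π ⟨i, h⟩ : ℕ) + 1 else 0

/-- The number of descents of a permutation of `[n]`. -/
def desNum (n : ℕ) (π : Equiv.Perm (Fin n)) : ℕ :=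
  ((Finset.range (n - 1)).filter (fun i => permWord n π (i + 1) < permWord n π i)).card

/-- Eulerian number `A(n,d)` (with `A(0,0) = 1`, and `0` for negative arguments). -/
noncomputable def eulerian (n d : ℤ) : ℕ :=
  if 0 ≤ n ∧ 0 ≤ d then
    Nat.card {π : Equiv.Perm (Fin n.toNat) // desNum n.toNat π = d.toNat}
  else 0

/-- Cyclic descent number: the number of points `x` with `c x < x`. -/
def cdes {n : ℕ} (c : Equiv.Perm (Fin n)) : ℕ :=
  (Finset.univ.filter (fun x : Fin n => c x < x)).card

/-- Cyclic ascent number: the number of points `x` with `x < c x`. -/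
def casc {n : ℕ} (c : Equiv.Perm (Fin n)) : ℕ :=
  (Finset.univ.filter (fun x : Fin n => x < c x)).card


section CycleEulerian

open Equiv List Finset

variable {m : ℕ}

/-- The cycle word list `[n, π₁, …, π_{n-1}]` (0-indexed: last, π 0, …). -/
def cycList (m : ℕ) (π : Equiv.Perm (Fin m)) : List (Fin (m+1)) :=
  Fin.last m :: List.ofFn (fun i => (π i).castSucc)

lemma cycList_length (π : Equiv.Perm (Fin m)) : (cycList m π).length = m + 1 := by
  simp [cycList]

lemma cycList_get_zero (π : Equiv.Perm (Fin m)) :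
    (cycList m π)[0]'(by simp [cycList_length]) = Fin.last m := rfl

lemma cycList_get_succ (π : Equiv.Perm (Fin m)) (i : ℕ) (h : i < m) :
    (cycList m π)[i+1]'(by simp [cycList_length]; omega) = (π ⟨i, h⟩).castSucc := by
  simp [cycList]

lemma cycList_nodup (π : Equiv.Perm (Fin m)) : (cycList m π).Nodup := by
  rw [cycList, List.nodup_cons]
  constructor
  · intro hx
    rw [List.mem_ofFn] at hx
    obtain ⟨i, hi⟩ := hx
    exact absurd hi (Fin.castSucc_lt_last (π i)).ne
  · rw [List.nodup_ofFn]
    exact (Fin.castSucc_injective m).comp π.injective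

/-- The cycle associated to a permutation word. -/
def toCyc (m : ℕ) (π : Equiv.Perm (Fin m)) : Equiv.Perm (Fin (m+1)) :=
  (cycList m π).formPerm

lemma toCyc_isCycleOn (π : Equiv.Perm (Fin m)) :
    (toCyc m π).IsCycleOn (Set.univ : Set (Fin (m+1))) := by
  have h := (cycList_nodup π).isCycleOn_formPerm
  have hs : { a | a ∈ cycList m π } = (Set.univ : Set (Fin (m+1))) := by
    ext x
    simp only [Set.mem_setOf_eq, Set.mem_univ, iff_true]
    induction x using Fin.lastCases with
    | last => exact List.mem_cons_self
    | cast i =>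
      refine List.mem_cons_of_mem _ ?_
      rw [List.mem_ofFn]
      exact ⟨π⁻¹ i, by simp⟩
  rwa [hs] at h

lemma toCyc_pow_last (π : Equiv.Perm (Fin m)) (i : ℕ) (h : i < m) :
    (toCyc m π ^ (i+1)) (Fin.last m) = (π ⟨i, h⟩).castSucc := by
  have h0 : 0 < (cycList m π).length := by rw [cycList_length]; omega
  have := List.formPerm_pow_apply_getElem (cycList m π) (cycList_nodup π) (i+1) 0 h0
  rw [cycList_get_zero] at this
  simp only [cycList_length, Nat.zero_add, Nat.mod_eq_of_lt (by omega : i + 1 < m + 1)] at this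
  rw [toCyc, this, cycList_get_succ π i h]

lemma toCyc_injective : Function.Injective (toCyc m) := by
  intro π π' hEq
  ext i
  have h1 := toCyc_pow_last π i.val i.isLt
  rw [hEq, toCyc_pow_last π' i.val i.isLt] at h1
  have := Fin.castSucc_injective m h1.symm
  simpa using congrArg Fin.val this

lemma cdes_toCyc (hm : 1 ≤ m) (π : Equiv.Perm (Fin m)) :
    cdes (toCyc m π) = desNum m π + 1 := by
  classical
  have hnd := cycList_nodup π
  have hlen := cycList_length π
  set c := toCyc m π with hc
  let f : Fin (m+1) → Fin (m+1) := fun j => (cycList m π)[(j : ℕ)]'(by rw [hlen]; exact j.isLt)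
  have hfinj : Function.Injective f := by
    intro a b hab
    have := (List.Nodup.getElem_inj_iff hnd).mp hab
    exact Fin.ext this
  let e : Fin (m+1) ≃ Fin (m+1) := Equiv.ofBijective f (Finite.injective_iff_bijective.mp hfinj)
  have key : ∀ j : Fin (m+1), c (f j) = (cycList m π)[((j : ℕ) + 1) % (m+1)]'(by
      rw [hlen]; exact Nat.mod_lt _ (Nat.succ_pos m)) := by
    intro j
    have := List.formPerm_apply_getElem (cycList m π) hnd (j : ℕ) (by rw [hlen]; exact j.isLt)
    simp only [hlen] at this
    exact this
  set h : ℕ → ℕ := fun i =>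
    if i + 1 < m then (if permWord m π (i+1) < permWord m π i then 1 else 0) else 0 with hh
  have step : ∀ i : Fin m, (if c (f i.succ) < f i.succ then 1 else 0) = h i.val := by
    intro i
    have hfs : f i.succ = (π ⟨i.val, i.isLt⟩).castSucc := by
      show (cycList m π)[(i : ℕ) + 1]'_ = _
      rw [cycList_get_succ π i.val i.isLt]
    rw [key i.succ]
    by_cases hi : (i : ℕ) + 1 < m
    · have hmod : ((i.succ : ℕ) + 1) % (m + 1) = (i : ℕ) + 2 := by
        simp only [Fin.val_succ]
        rw [Nat.mod_eq_of_lt (by omega)]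
      simp only [hmod]
      have h2 : (cycList m π)[(i:ℕ)+2]'(by rw [hlen]; omega) = (π ⟨(i:ℕ)+1, hi⟩).castSucc :=
        cycList_get_succ π ((i:ℕ)+1) hi
      rw [h2, hfs]
      have hhi : h (i:ℕ) = if permWord m π ((i:ℕ)+1) < permWord m π (i:ℕ) then 1 else 0 := by
        simp only [hh]
        rw [if_pos hi]
      rw [hhi]
      have hp1 : permWord m π ((i:ℕ)+1) = ((π ⟨(i:ℕ)+1, hi⟩ : Fin m) : ℕ) + 1 := dif_pos hi
      have hp0 : permWord m π (i:ℕ) = ((π ⟨(i:ℕ), i.isLt⟩ : Fin m) : ℕ) + 1 := dif_pos i.isLt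
      rw [hp1, hp0]
      refine if_congr ?_ rfl rfl
      rw [Fin.castSucc_lt_castSucc_iff, Fin.lt_def]
      omega
    · have hmod : ((i.succ : ℕ) + 1) % (m + 1) = 0 := by
        simp only [Fin.val_succ]
        rw [show (i:ℕ)+1+1 = m+1 by omega, Nat.mod_self]
      simp only [hmod]
      have hhi : h (i:ℕ) = 0 := by
        simp only [hh]
        rw [if_neg hi]
      rw [hhi, cycList_get_zero, hfs, if_neg]
      exact fun hcon => absurd hcon (Fin.castSucc_lt_last _).asymm
  have hcard : cdes c = ∑ x : Fin (m+1), (if c x < x then 1 else 0) := by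
    rw [cdes, Finset.card_filter]
  rw [hcard, ← Equiv.sum_comp e (fun x => if c x < x then 1 else 0)]
  have he : ∀ j, e j = f j := fun j => rfl
  simp only [he]
  rw [Fin.sum_univ_succ]
  have hf0 : f (0 : Fin (m+1)) = Fin.last m := by
    show (cycList m π)[(0:ℕ)]'_ = _
    rfl
  have hc0 : c (f 0) = (π ⟨0, hm⟩).castSucc := by
    rw [key 0]
    simp only [Fin.val_zero, show (0 + 1) % (m+1) = 0 + 1 from Nat.mod_eq_of_lt (by omega)]
    exact cycList_get_succ π 0 hm
  rw [hc0, hf0, if_pos (Fin.castSucc_lt_last _)]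
  simp only [step]
  rw [show (∑ i : Fin m, h (i : ℕ)) = ∑ i ∈ Finset.range m, h i from
    Fin.sum_univ_eq_sum_range h m]
  have hrange : Finset.range m = Finset.range ((m-1)+1) := by
    congr 1
    omega
  rw [hrange, Finset.sum_range_succ]
  have hlast : h (m - 1) = 0 := by
    simp only [hh]
    rw [if_neg (by omega)]
  have hdes : ∑ i ∈ Finset.range (m-1), h i = desNum m π := by
    rw [desNum, Finset.card_filter]
    refine Finset.sum_congr rfl fun i hi => ?_
    rw [Finset.mem_range] at hi
    simp only [hh]
    rw [if_pos (by omega)]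
  rw [hlast, hdes]
  omega

lemma exists_toCyc (c : Equiv.Perm (Fin (m+1))) (hcyc : c.IsCycleOn (Set.univ : Set (Fin (m+1)))) :
    ∃ π : Equiv.Perm (Fin m), toCyc m π = c := by
  classical
  have hcyc' : c.IsCycleOn ((Finset.univ : Finset (Fin (m+1))) : Set (Fin (m+1))) := by
    rwa [Finset.coe_univ]
  let g : Fin (m+1) → Fin (m+1) := fun j => (c ^ (j : ℕ)) (Fin.last m)
  have hgsurj : Function.Surjective g := by
    intro b
    obtain ⟨k, hk, hkb⟩ := hcyc'.exists_pow_eq (Finset.mem_univ (Fin.last m)) (Finset.mem_univ b)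
    rw [Finset.card_univ, Fintype.card_fin] at hk
    exact ⟨⟨k, hk⟩, hkb⟩
  have hginj : Function.Injective g := Finite.injective_iff_surjective.mpr hgsurj
  have hg0 : g 0 = Fin.last m := by simp [g]
  have hper : (c ^ (m+1)) (Fin.last m) = Fin.last m := by
    have := hcyc'.pow_card_apply (Finset.mem_univ (Fin.last m))
    rwa [Finset.card_univ, Fintype.card_fin] at this
  have hne : ∀ i : Fin m, g i.succ ≠ Fin.last m := by
    intro i hcon
    rw [← hg0] at hcon
    exact Fin.succ_ne_zero i (hginj hcon)
  let p : Fin m → Fin m := fun i => (g i.succ).castPred (hne i)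
  have hpinj : Function.Injective p := by
    intro a b hab
    have h2 := congrArg Fin.castSucc hab
    simp only [p, Fin.castSucc_castPred] at h2
    exact Fin.succ_injective _ (hginj h2)
  let π : Equiv.Perm (Fin m) := Equiv.ofBijective p (Finite.injective_iff_bijective.mp hpinj)
  refine ⟨π, ?_⟩
  have hπ : ∀ i : Fin m, π i = p i := fun i => rfl
  have hlist : ∀ j : Fin (m+1),
      (cycList m π)[(j : ℕ)]'(by rw [cycList_length]; exact j.isLt) = g j := by
    intro j
    match hj : j with
    | ⟨0, h0⟩ => rw [cycList_get_zero]; exact hg0.symm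
    | ⟨k+1, hk⟩ =>
      rw [cycList_get_succ π k (by omega)]
      rw [hπ]
      show (p ⟨k, _⟩).castSucc = _
      rw [Fin.castSucc_castPred]
      rfl
  apply Equiv.ext
  intro x
  obtain ⟨j, rfl⟩ := hgsurj x
  show (cycList m π).formPerm (g j) = c (g j)
  have hj' : (j : ℕ) < (cycList m π).length := by rw [cycList_length]; exact j.isLt
  conv_lhs => rw [← hlist j]
  rw [List.formPerm_apply_getElem _ (cycList_nodup π) (j : ℕ) hj']
  simp only [cycList_length]
  have hcg : c (g j) = (c ^ ((j : ℕ) + 1)) (Fin.last m) := by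
    rw [pow_succ']
    rfl
  by_cases hjm : (j : ℕ) + 1 < m + 1
  · simp only [Nat.mod_eq_of_lt hjm]
    exact (hlist ⟨(j : ℕ) + 1, hjm⟩).trans hcg.symm
  · have hjm' : (j : ℕ) + 1 = m + 1 := by omega
    simp only [hjm', Nat.mod_self]
    refine (hlist 0).trans ?_
    rw [hg0, hcg, hjm', hper]

noncomputable def eulerianAux (a b : ℕ) : ℕ :=
  Nat.card {π : Equiv.Perm (Fin a) // desNum a π = b}

lemma nat_card_subtype {α : Type*} [Fintype α] (p : α → Prop) [DecidablePred p] :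
    Nat.card {x // p x} = (Finset.univ.filter p).card := by
  simp [Nat.card_eq_fintype_card, Fintype.card_subtype]

lemma cdes_inv {n : ℕ} (c : Equiv.Perm (Fin n)) : cdes c⁻¹ = casc c := by
  classical
  rw [cdes, casc]
  refine Finset.card_bij' (fun x _ => c⁻¹ x) (fun y _ => c y) ?_ ?_ ?_ ?_
  · intro x hx
    simp only [Finset.mem_filter, Finset.mem_univ, true_and] at hx ⊢
    simpa using hx
  · intro y hy
    simp only [Finset.mem_filter, Finset.mem_univ, true_and] at hy ⊢
    simpa using hy
  · intro x _; simp
  · intro y _; simp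

lemma apply_ne_self {n : ℕ} (hn : 2 ≤ n) (c : Equiv.Perm (Fin n))
    (hcyc : c.IsCycleOn (Set.univ : Set (Fin n))) (x : Fin n) : c x ≠ x := by
  have : Nontrivial (Fin n) := Fin.nontrivial_iff_two_le.mpr hn
  exact hcyc.apply_ne Set.nontrivial_univ (Set.mem_univ x)

lemma cdes_add_casc {n : ℕ} (hn : 2 ≤ n) (c : Equiv.Perm (Fin n))
    (hcyc : c.IsCycleOn (Set.univ : Set (Fin n))) : cdes c + casc c = n := by
  classical
  rw [cdes, casc]
  have h2 : Finset.univ.filter (fun x : Fin n => x < c x)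
      = Finset.univ.filter (fun x : Fin n => ¬ c x < x) := by
    ext x
    simp only [Finset.mem_filter, Finset.mem_univ, true_and]
    have := apply_ne_self hn c hcyc x
    constructor
    · exact fun h => h.asymm
    · intro h
      exact lt_of_le_of_ne (not_lt.mp h) (Ne.symm this)
  rw [h2, Finset.card_filter_add_card_filter_not, Finset.card_univ, Fintype.card_fin]

lemma cdes_pos {n : ℕ} (hn : 2 ≤ n) (c : Equiv.Perm (Fin n))
    (hcyc : c.IsCycleOn (Set.univ : Set (Fin n))) : 1 ≤ cdes c := by
  classical
  rw [cdes]
  show 0 < _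
  rw [Finset.card_pos]
  obtain ⟨m, rfl⟩ : ∃ m, n = m + 1 := ⟨n - 1, by omega⟩
  refine ⟨Fin.last m, ?_⟩
  simp only [Finset.mem_filter, Finset.mem_univ, true_and]
  exact lt_of_le_of_ne (Fin.le_last _) (apply_ne_self hn c hcyc _)

lemma casc_pos {n : ℕ} (hn : 2 ≤ n) (c : Equiv.Perm (Fin n))
    (hcyc : c.IsCycleOn (Set.univ : Set (Fin n))) : 1 ≤ casc c := by
  classical
  rw [casc]
  show 0 < _
  rw [Finset.card_pos]
  obtain ⟨m, rfl⟩ : ∃ m, n = m + 1 := ⟨n - 1, by omega⟩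
  refine ⟨0, ?_⟩
  simp only [Finset.mem_filter, Finset.mem_univ, true_and]
  exact lt_of_le_of_ne (Fin.zero_le _) (Ne.symm (apply_ne_self hn c hcyc _))

/-- The main bijective count. -/
lemma card_cyc_cdes (hm : 1 ≤ m) (k : ℕ) :
    Nat.card {c : Equiv.Perm (Fin (m+1)) //
        c.IsCycleOn (Set.univ : Set (Fin (m+1))) ∧ cdes c = k + 1}
      = Nat.card {π : Equiv.Perm (Fin m) // desNum m π = k} := by
  refine (Nat.card_congr (Equiv.ofBijective
    (fun π : {π : Equiv.Perm (Fin m) // desNum m π = k} =>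
      (⟨toCyc m π.1, toCyc_isCycleOn π.1, by rw [cdes_toCyc hm, π.2]⟩ :
        {c : Equiv.Perm (Fin (m+1)) //
          c.IsCycleOn (Set.univ : Set (Fin (m+1))) ∧ cdes c = k + 1})) ⟨?_, ?_⟩)).symm
  · intro a b hab
    exact Subtype.ext (toCyc_injective (congrArg Subtype.val hab))
  · rintro ⟨c, hcyc, hk⟩
    obtain ⟨π, rfl⟩ := exists_toCyc c hcyc
    have : desNum m π = k := by
      have := cdes_toCyc hm π
      omega
    exact ⟨⟨π, this⟩, rfl⟩

/-- Inversion swaps cdes and casc. -/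
lemma card_cyc_inv {n : ℕ} (hn : 2 ≤ n) (a b : ℕ) (hab : a + b = n) :
    Nat.card {c : Equiv.Perm (Fin n) //
        c.IsCycleOn (Set.univ : Set (Fin n)) ∧ cdes c = a}
      = Nat.card {c : Equiv.Perm (Fin n) //
        c.IsCycleOn (Set.univ : Set (Fin n)) ∧ cdes c = b} := by
  refine Nat.card_congr ⟨fun c => ⟨c.1⁻¹, c.2.1.inv, ?_⟩, fun c => ⟨c.1⁻¹, c.2.1.inv, ?_⟩,
    fun c => Subtype.ext (inv_inv _), fun c => Subtype.ext (inv_inv _)⟩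
  · obtain ⟨c, hcyc, hc⟩ := c
    have h1 := cdes_add_casc hn c hcyc
    have h2 := cdes_inv c
    simp only
    omega
  · obtain ⟨c, hcyc, hc⟩ := c
    have h1 := cdes_add_casc hn c hcyc
    have h2 := cdes_inv c
    simp only
    omega

end CycleEulerian

/-- For odd `n ≥ 3` and `0 ≤ d ≤ (n-1)/2`, the number of cyclic permutations of `[n]`
(single `n`-cycles) `c` with `min(cdes c, casc c) = d` equals `2·A(n-1, d-1)`. -/
theorem cycle_count_eq_two_eulerian (n d : ℕ) (hodd : Odd n) (hn : 3 ≤ n)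
    (hd : d ≤ (n - 1) / 2) :
    Nat.card {c : Equiv.Perm (Fin n) //
        c.IsCycleOn (Set.univ : Set (Fin n)) ∧ min (cdes c) (casc c) = d} =
      2 * eulerian ((n : ℤ) - 1) ((d : ℤ) - 1) := by
  classical
  obtain ⟨m, rfl⟩ : ∃ m, n = m + 1 := ⟨n - 1, by omega⟩
  have hm : 1 ≤ m := by omega
  have hn2 : 2 ≤ m + 1 := by omega
  have hmeven : m % 2 = 0 := by obtain ⟨t, ht⟩ := hodd; omega
  have hd2 : 2 * d ≤ m := by
    have h1 : (m + 1 - 1) / 2 = m / 2 := by omega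
    omega
  rcases Nat.eq_zero_or_pos d with rfl | hdpos
  · have hE : IsEmpty {c : Equiv.Perm (Fin (m+1)) //
        c.IsCycleOn (Set.univ : Set (Fin (m+1))) ∧ min (cdes c) (casc c) = 0} := by
      refine ⟨?_⟩
      rintro ⟨c, hcyc, hmin⟩
      have h1 := cdes_pos hn2 c hcyc
      have h2 := casc_pos hn2 c hcyc
      omega
    rw [Nat.card_of_isEmpty, eulerian, if_neg (by rintro ⟨-, hb⟩; omega)]
  · -- rewrite RHS
    have h1' : ((((m+1) : ℕ) : ℤ) - 1).toNat = m := by push_cast; omega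
    have h2 : ((d : ℤ) - 1).toNat = d - 1 := by omega
    have he : eulerian ((((m+1) : ℕ) : ℤ) - 1) ((d : ℤ) - 1)
        = eulerianAux (((((m+1) : ℕ) : ℤ) - 1).toNat) (((d : ℤ) - 1).toNat) := by
      rw [eulerian, if_pos (by constructor <;> omega)]
      rfl
    rw [he, h1', h2]
    -- rewrite LHS predicate
    have hiff : ∀ c : Equiv.Perm (Fin (m+1)),
        (c.IsCycleOn (Set.univ : Set (Fin (m+1))) ∧ min (cdes c) (casc c) = d)
          ↔ ((c.IsCycleOn (Set.univ : Set (Fin (m+1))) ∧ cdes c = d)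
            ∨ (c.IsCycleOn (Set.univ : Set (Fin (m+1))) ∧ cdes c = (m+1) - d)) := by
      intro c
      by_cases hP : c.IsCycleOn (Set.univ : Set (Fin (m+1)))
      · have hsum := cdes_add_casc hn2 c hP
        simp only [hP, true_and]
        omega
      · simp [hP]
    rw [nat_card_subtype]
    rw [Finset.filter_congr (fun c _ => by rw [hiff c]), Finset.filter_or,
      Finset.card_union_of_disjoint (by
        rw [Finset.disjoint_left]
        rintro c hc1 hc2
        simp only [Finset.mem_filter] at hc1 hc2
        omega)]
    rw [← nat_card_subtype, ← nat_card_subtype]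
    rw [card_cyc_inv hn2 ((m+1) - d) d (by omega)]
    have hkey := card_cyc_cdes hm (d - 1)
    rw [show d - 1 + 1 = d by omega] at hkey
    rw [hkey]
    rw [eulerianAux]
    ring
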